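/- Let E be a bounded idempotent operator (E² = E) on a Hilbert space H with polar decomposition E = V|E|. Then the Moore-Penrose pseudoinverse of E equals (V*)², and consequently E† is a product of two orthogonal projections: E† = P_{N(E)^⊥} P_{R(E)}. -/

import Mathlib

open ContinuousLinearMap Submodule LinearMap

variable {H : Type*} [NormedAddCommGroup H] [InnerProductSpace ℂ H] [CompleteSpace H]

/-- `P` is an orthogonal projection: `P² = P = P*`. -/
def IsOrthoProj (P : H →L[ℂ] H) : Prop :=
  P ∘L P = P ∧ ContinuousLinearMap.adjoint P = P

/-- The orthogonal projection onto a (complete, i.e. closed) subspace,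
as an operator on `H`. -/
noncomputable def projOn (K : Submodule ℂ H) [CompleteSpace K] : H →L[ℂ] H :=
  K.subtypeL.comp (orthogonalProjection K)

/-- The orthogonal projection onto a closed subspace, as an operator on `H`. -/
noncomputable def projOnc (K : Submodule ℂ H) (hK : IsClosed (K : Set H)) : H →L[ℂ] H :=
  haveI : CompleteSpace K := hK.completeSpace_coe
  K.subtypeL.comp (orthogonalProjection K)

/-- `V` is a partial isometry: it is isometric on the orthogonal complement of its kernel. -/
def IsPartialIsometry (V : H →L[ℂ] H) : Prop :=
  ∀ x ∈ (LinearMap.ker (V : H →ₗ[ℂ] H))ᗮ, ‖V x‖ = ‖x‖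

local notation "⟪" x ", " y "⟫" => @inner ℂ _ _ x y

/-- Two self-adjoint idempotents with the same kernel coincide. -/
lemma sa_idem_eq' (T S : H →L[ℂ] H) (hT1 : T ∘L T = T) (hT2 : IsSelfAdjoint T)
    (hS1 : S ∘L S = S) (hS2 : IsSelfAdjoint S)
    (hk : LinearMap.ker (T : H →ₗ[ℂ] H) = LinearMap.ker (S : H →ₗ[ℂ] H)) : T = S := by
  have hTS : T ∘L S = T := by
    ext x
    have hm : x - S x ∈ LinearMap.ker (S : H →ₗ[ℂ] H) := by
      have := ContinuousLinearMap.ext_iff.mp hS1 x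
      simp only [ContinuousLinearMap.comp_apply] at this
      simp [LinearMap.mem_ker, map_sub, this]
    rw [← hk] at hm
    have h0 : T (x - S x) = 0 := hm
    simp only [map_sub, sub_eq_zero] at h0
    simpa [ContinuousLinearMap.comp_apply] using h0.symm
  have hST : S ∘L T = S := by
    ext x
    have hm : x - T x ∈ LinearMap.ker (T : H →ₗ[ℂ] H) := by
      have := ContinuousLinearMap.ext_iff.mp hT1 x
      simp only [ContinuousLinearMap.comp_apply] at this
      simp [LinearMap.mem_ker, map_sub, this]
    rw [hk] at hm
    have h0 : S (x - T x) = 0 := hm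
    simp only [map_sub, sub_eq_zero] at h0
    simpa [ContinuousLinearMap.comp_apply] using h0.symm
  calc T = ContinuousLinearMap.adjoint T := hT2.adjoint_eq.symm
    _ = ContinuousLinearMap.adjoint (T ∘L S) := by rw [hTS]
    _ = ContinuousLinearMap.adjoint S ∘L ContinuousLinearMap.adjoint T := by
        rw [ContinuousLinearMap.adjoint_comp]
    _ = S ∘L T := by rw [hS2.adjoint_eq, hT2.adjoint_eq]
    _ = S := hST

theorem stmt19 (E F V absE : H →L[ℂ] H) (hidem : E ∘L E = E)
    (hV : IsPartialIsometry V) (hker : LinearMap.ker (V : H →ₗ[ℂ] H) = LinearMap.ker (E : H →ₗ[ℂ] H))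
    (habs_pos : absE.IsPositive)
    (habs_sq : absE ∘L absE = ContinuousLinearMap.adjoint E ∘L E)
    (hpolar : E = V ∘L absE)
    (hF1 : E ∘L F ∘L E = E) (hF2 : F ∘L E ∘L F = F)
    (hF3 : IsSelfAdjoint (E ∘L F)) (hF4 : IsSelfAdjoint (F ∘L E)) :
    F = ContinuousLinearMap.adjoint V ∘L ContinuousLinearMap.adjoint V ∧
      ∃ hcl : IsClosed ((LinearMap.range (E : H →ₗ[ℂ] H) : Submodule ℂ H) : Set H),
        F = projOn (LinearMap.ker (E : H →ₗ[ℂ] H))ᗮ ∘L projOnc (LinearMap.range (E : H →ₗ[ℂ] H)) hcl := by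
  set W := ContinuousLinearMap.adjoint V with hW
  -- pointwise versions of hypotheses
  have hidem' : ∀ x, E (E x) = x → True := fun _ _ => trivial
  have hidemx : ∀ x, E (E x) = E x := by
    intro x; have := ContinuousLinearMap.ext_iff.mp hidem x
    simpa [ContinuousLinearMap.comp_apply] using this
  have hF1x : ∀ x, E (F (E x)) = E x := by
    intro x; have := ContinuousLinearMap.ext_iff.mp hF1 x
    simpa [ContinuousLinearMap.comp_apply] using this
  have hF2x : ∀ x, F (E (F x)) = F x := by
    intro x; have := ContinuousLinearMap.ext_iff.mp hF2 x
    simpa [ContinuousLinearMap.comp_apply] using this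
  have hpolarx : ∀ x, E x = V (absE x) := by
    intro x; have := ContinuousLinearMap.ext_iff.mp hpolar x
    simpa [ContinuousLinearMap.comp_apply] using this
  have habs_sa : IsSelfAdjoint absE := habs_pos.isSelfAdjoint
  have habs_sym : ∀ x y : H, ⟪absE x, y⟫ = ⟪x, absE y⟫ := by
    intro x y
    conv_lhs => rw [← habs_sa.adjoint_eq]
    exact ContinuousLinearMap.adjoint_inner_left absE y x
  -- kernels of E and |E| agree
  have hkerabsx : ∀ x, E x = 0 ↔ absE x = 0 := by
    intro x
    have key : ⟪absE x, absE x⟫ = ⟪E x, E x⟫ := by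
      calc ⟪absE x, absE x⟫ = ⟪x, absE (absE x)⟫ := habs_sym x (absE x)
        _ = ⟪x, (absE ∘L absE) x⟫ := by rw [ContinuousLinearMap.comp_apply]
        _ = ⟪x, ContinuousLinearMap.adjoint E (E x)⟫ := by
            rw [habs_sq, ContinuousLinearMap.comp_apply]
        _ = ⟪E x, E x⟫ := ContinuousLinearMap.adjoint_inner_right E x (E x)
    constructor
    · intro h
      have : ⟪absE x, absE x⟫ = 0 := by rw [key, h, inner_zero_right]
      exact inner_self_eq_zero.mp this
    · intro h
      have : ⟪E x, E x⟫ = 0 := by rw [← key, h, inner_zero_right]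
      exact inner_self_eq_zero.mp this
  have hkerEabs : LinearMap.ker (E : H →ₗ[ℂ] H) = LinearMap.ker (absE : H →ₗ[ℂ] H) := by
    ext x; simp only [LinearMap.mem_ker, ContinuousLinearMap.coe_coe]
    exact hkerabsx x
  have hkerVx : ∀ x, E x = 0 → V x = 0 := by
    intro x hx
    have : x ∈ LinearMap.ker (V : H →ₗ[ℂ] H) := by rw [hker]; exact hx
    exact this
  -- the projection P onto (ker E)ᗮ
  haveI : CompleteSpace (LinearMap.ker (E : H →ₗ[ℂ] H)) :=
    (ContinuousLinearMap.isClosed_ker E).completeSpace_coe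
  set P := projOn (LinearMap.ker (E : H →ₗ[ℂ] H))ᗮ with hP
  have hPapp : ∀ x, P x = (orthogonalProjection (LinearMap.ker (E : H →ₗ[ℂ] H))ᗮ x : H) := by
    intro x; rfl
  have hPmem : ∀ x, P x ∈ (LinearMap.ker (E : H →ₗ[ℂ] H))ᗮ := by
    intro x; rw [hPapp]; exact Submodule.coe_mem _
  have hPid : ∀ x ∈ (LinearMap.ker (E : H →ₗ[ℂ] H))ᗮ, P x = x := by
    intro x hx; rw [hPapp]; exact Submodule.starProjection_eq_self_iff.mpr hx
  have hPsub : ∀ x, x - P x ∈ LinearMap.ker (E : H →ₗ[ℂ] H) := by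
    intro x
    have h1 : x - P x ∈ ((LinearMap.ker (E : H →ₗ[ℂ] H))ᗮ)ᗮ := by
      rw [hPapp]; exact Submodule.sub_starProjection_mem_orthogonal x
    rwa [Submodule.orthogonal_orthogonal] at h1
  have hPzero : ∀ x, P x = 0 ↔ x ∈ LinearMap.ker (E : H →ₗ[ℂ] H) := by
    intro x
    rw [hPapp]
    rw [show ((orthogonalProjection (LinearMap.ker (E : H →ₗ[ℂ] H))ᗮ x : H) = 0 ↔
        orthogonalProjection (LinearMap.ker (E : H →ₗ[ℂ] H))ᗮ x = 0) from
      ⟨fun h => Subtype.ext h, fun h => congrArg _ h⟩]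
    rw [Submodule.orthogonalProjectionOnto_eq_zero_iff, Submodule.orthogonal_orthogonal]
  have hPP : P ∘L P = P := by
    ext x
    simp only [ContinuousLinearMap.comp_apply]
    exact hPid _ (hPmem x)
  have hPsa : IsSelfAdjoint P := isSelfAdjoint_starProjection (LinearMap.ker (E : H →ₗ[ℂ] H))ᗮ
  -- V kills (1 - P)
  have hVPx : ∀ x, V (P x) = V x := by
    intro x
    have h0 : V (x - P x) = 0 := hkerVx _ (hPsub x)
    rw [map_sub, sub_eq_zero] at h0
    exact h0.symm
  -- |E| x lands in (ker E)ᗮ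
  have habsmem : ∀ x, absE x ∈ (LinearMap.ker (E : H →ₗ[ℂ] H))ᗮ := by
    intro x
    rw [Submodule.mem_orthogonal]
    intro u hu
    have hu0 : absE u = 0 := (hkerabsx u).mp hu
    calc ⟪u, absE x⟫ = ⟪absE u, x⟫ := (habs_sym u x).symm
      _ = 0 := by rw [hu0, inner_zero_left]
  have hPabs : ∀ x, P (absE x) = absE x := fun x => hPid _ (habsmem x)
  -- W ∘ V = P
  have hWV : ∀ x, W (V x) = P x := by
    intro x
    apply ext_inner_right ℂ
    intro y
    have hiso : ∀ a b : H, a ∈ (LinearMap.ker (V : H →ₗ[ℂ] H))ᗮ → b ∈ (LinearMap.ker (V : H →ₗ[ℂ] H))ᗮ →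
        ⟪V a, V b⟫ = ⟪a, b⟫ := by
      intro a b ha hb
      let f : (LinearMap.ker (V : H →ₗ[ℂ] H))ᗮ →ₗᵢ[ℂ] H :=
        { toLinearMap := V.toLinearMap.comp (Submodule.subtype _)
          norm_map' := fun z => hV z z.2 }
      have := f.inner_map_map ⟨a, ha⟩ ⟨b, hb⟩
      exact this
    have hmemP : ∀ z, P z ∈ (LinearMap.ker (V : H →ₗ[ℂ] H))ᗮ := by
      intro z; rw [hker]; exact hPmem z
    calc ⟪W (V x), y⟫ = ⟪V x, V y⟫ := ContinuousLinearMap.adjoint_inner_left V y (V x)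
      _ = ⟪V (P x), V (P y)⟫ := by rw [hVPx, hVPx]
      _ = ⟪P x, P y⟫ := hiso _ _ (hmemP x) (hmemP y)
      _ = ⟪P x, y⟫ := by
          have h2 : ⟪y - P y, P x⟫ = 0 :=
            (Submodule.mem_orthogonal _ _).mp (hPmem x) _ (hPsub y)
          have h3 : ⟪P x, y - P y⟫ = 0 := by
            rw [← inner_conj_symm (P x) (y - P y), h2, map_zero]
          rw [inner_sub_right] at h3
          exact (sub_eq_zero.mp h3).symm
  -- |E| ∘ V ∘ |E| = |E| and |E| ∘ W ∘ |E| = |E|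
  have habsVabs : ∀ x, absE (V (absE x)) = absE x := by
    intro x
    have h1 : V (absE (V (absE x))) = V (absE x) := by
      rw [← hpolarx, ← hpolarx]; exact hidemx x
    have h2 : W (V (absE (V (absE x)))) = W (V (absE x)) := congrArg W h1
    rw [hWV, hWV, hPabs, hPabs] at h2
    exact h2
  have habsVabs_op : absE ∘L V ∘L absE = absE := by
    ext x
    simp only [ContinuousLinearMap.comp_apply]
    exact habsVabs x
  have habsWabs : ∀ x, absE (W (absE x)) = absE x := by
    intro x
    have h1 : ContinuousLinearMap.adjoint (absE ∘L V ∘L absE) = absE := by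
      rw [habsVabs_op, habs_sa.adjoint_eq]
    rw [ContinuousLinearMap.adjoint_comp, ContinuousLinearMap.adjoint_comp,
      habs_sa.adjoint_eq, ← hW] at h1
    have := ContinuousLinearMap.ext_iff.mp h1 x
    simpa [ContinuousLinearMap.comp_apply] using this
  -- claim1 : V (W (|E| x)) = V (V (|E| x))
  have hclaim1 : ∀ x, V (W (absE x)) = V (V (absE x)) := by
    intro x
    have h0 : absE (W (absE x) - V (absE x)) = 0 := by
      rw [map_sub, habsWabs, habsVabs, sub_self]
    have h1 : V (W (absE x) - V (absE x)) = 0 := by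
      apply hkerVx
      exact (hkerabsx _).mpr h0
    rw [map_sub, sub_eq_zero] at h1
    exact h1
  -- W ∘ E = |E|
  have hWE : ∀ x, W (E x) = absE x := by
    intro x; rw [hpolarx, hWV, hPabs]
  -- W maps into (ker E)ᗮ
  have hWmem : ∀ y, W y ∈ (LinearMap.ker (E : H →ₗ[ℂ] H))ᗮ := by
    intro y
    rw [Submodule.mem_orthogonal]
    intro u hu
    have hu0 : V u = 0 := hkerVx u hu
    calc ⟪u, W y⟫ = ⟪V u, y⟫ := ContinuousLinearMap.adjoint_inner_right V u y
      _ = 0 := by rw [hu0, inner_zero_left]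
  -- range E is closed
  have hrange_eq : (LinearMap.range (E : H →ₗ[ℂ] H) : Set H) =
      (LinearMap.ker ((ContinuousLinearMap.id ℂ H - E : H →L[ℂ] H) : H →ₗ[ℂ] H) : Set H) := by
    ext x
    simp only [SetLike.mem_coe, LinearMap.mem_range, LinearMap.mem_ker,
      ContinuousLinearMap.coe_coe, ContinuousLinearMap.sub_apply,
      ContinuousLinearMap.id_apply, sub_eq_zero]
    constructor
    · rintro ⟨y, rfl⟩; exact (hidemx y).symm
    · intro h; exact ⟨x, h.symm⟩
  have hcl : IsClosed ((LinearMap.range (E : H →ₗ[ℂ] H) : Submodule ℂ H) : Set H) := by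
    rw [hrange_eq]
    exact ContinuousLinearMap.isClosed_ker _
  -- range of V is contained in range E
  have hrangeV : ∀ z, V z ∈ LinearMap.range (E : H →ₗ[ℂ] H) := by
    intro z
    have hz : V z = V (P z) := (hVPx z).symm
    have hmem : P z ∈ ((LinearMap.range (absE : H →ₗ[ℂ] H))ᗮ)ᗮ := by
      have hker_absE : LinearMap.ker (absE : H →ₗ[ℂ] H) = (LinearMap.range (absE : H →ₗ[ℂ] H))ᗮ := by
        ext x
        constructor
        · intro hx
          rw [Submodule.mem_orthogonal]
          intro u hu
          obtain ⟨y, rfl⟩ := hu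
          have hx0 : absE x = 0 := hx
          calc ⟪absE y, x⟫ = ⟪y, absE x⟫ := habs_sym y x
            _ = 0 := by rw [hx0, inner_zero_right]
        · intro hx
          have h1 : ⟪absE (absE x), x⟫ = 0 :=
            (Submodule.mem_orthogonal _ _).mp hx _ ⟨absE x, rfl⟩
          have h2 : ⟪absE x, absE x⟫ = 0 := by
            rw [← habs_sym]; exact h1
          exact inner_self_eq_zero.mp h2
      have := hPmem z
      rw [hkerEabs, hker_absE] at this
      exact this
    rw [Submodule.orthogonal_orthogonal_eq_closure] at hmem
    have hmemc : (P z) ∈ closure ((LinearMap.range (absE : H →ₗ[ℂ] H) : Submodule ℂ H) : Set H) := by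
      have := hmem
      rwa [← Submodule.topologicalClosure_coe, SetLike.mem_coe]
    have himg : V (P z) ∈ closure ((LinearMap.range (E : H →ₗ[ℂ] H) : Submodule ℂ H) : Set H) := by
      refine map_mem_closure V.continuous hmemc ?_
      rintro y ⟨w, rfl⟩
      exact ⟨w, hpolarx w⟩
    rw [hcl.closure_eq] at himg
    rw [hz]
    exact himg
  -- W kills (range E)ᗮ
  have hWker : ∀ y ∈ (LinearMap.range (E : H →ₗ[ℂ] H))ᗮ, W y = 0 := by
    intro y hy
    have h1 : ⟪W y, W y⟫ = ⟪y, V (W y)⟫ :=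
      ContinuousLinearMap.adjoint_inner_left V (W y) y
    have h2 : ⟪V (W y), y⟫ = 0 :=
      (Submodule.mem_orthogonal _ _).mp hy _ (hrangeV (W y))
    have h3 : ⟪y, V (W y)⟫ = 0 := by
      rw [← inner_conj_symm y (V (W y)), h2, map_zero]
    rw [h3] at h1
    exact inner_self_eq_zero.mp h1
  -- the projection Q onto range E
  haveI : CompleteSpace (LinearMap.range (E : H →ₗ[ℂ] H) : Submodule ℂ H) := hcl.completeSpace_coe
  set Q := projOnc (LinearMap.range (E : H →ₗ[ℂ] H)) hcl with hQ
  have hQapp : ∀ x, Q x = (orthogonalProjection (LinearMap.range (E : H →ₗ[ℂ] H)) x : H) := by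
    intro x; rfl
  have hQmem : ∀ x, Q x ∈ LinearMap.range (E : H →ₗ[ℂ] H) := by
    intro x; rw [hQapp]; exact Submodule.coe_mem _
  have hQid : ∀ x ∈ (LinearMap.range (E : H →ₗ[ℂ] H) : Submodule ℂ H), Q x = x := by
    intro x hx; rw [hQapp]; exact Submodule.starProjection_eq_self_iff.mpr hx
  have hQsub : ∀ x, x - Q x ∈ (LinearMap.range (E : H →ₗ[ℂ] H))ᗮ := by
    intro x; rw [hQapp]; exact Submodule.sub_starProjection_mem_orthogonal x
  have hQzero : ∀ x, Q x = 0 ↔ x ∈ (LinearMap.range (E : H →ₗ[ℂ] H))ᗮ := by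
    intro x
    rw [hQapp]
    rw [show ((orthogonalProjection (LinearMap.range (E : H →ₗ[ℂ] H)) x : H) = 0 ↔
        orthogonalProjection (LinearMap.range (E : H →ₗ[ℂ] H)) x = 0) from
      ⟨fun h => Subtype.ext h, fun h => congrArg _ h⟩]
    exact Submodule.orthogonalProjectionOnto_eq_zero_iff
  have hQQ : Q ∘L Q = Q := by
    ext x
    simp only [ContinuousLinearMap.comp_apply]
    exact hQid _ (hQmem x)
  have hQsa : IsSelfAdjoint Q := isSelfAdjoint_starProjection (LinearMap.range (E : H →ₗ[ℂ] H))
  -- F ∘ E = P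
  have hFE : F ∘L E = P := by
    apply sa_idem_eq'
    · ext x
      simp only [ContinuousLinearMap.comp_apply]
      rw [hF1x x]
    · exact hF4
    · exact hPP
    · exact hPsa
    · ext x
      simp only [LinearMap.mem_ker, ContinuousLinearMap.coe_coe,
        ContinuousLinearMap.comp_apply]
      constructor
      · intro h
        have : E x = 0 := by
          have := congrArg E h
          rw [hF1x x, map_zero] at this
          exact this
        exact (hPzero x).mpr this
      · intro h
        have hx : E x = 0 := (hPzero x).mp h
        rw [hx, map_zero]
  -- E ∘ F is symmetric
  have hEFsym : ∀ a b : H, ⟪E (F a), b⟫ = ⟪a, E (F b)⟫ := by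
    intro a b
    have h1 : ⟪(E ∘L F) a, b⟫ = ⟪a, (E ∘L F) b⟫ := by
      conv_lhs => rw [← hF3.adjoint_eq]
      exact ContinuousLinearMap.adjoint_inner_left (E ∘L F) b a
    simpa [ContinuousLinearMap.comp_apply] using h1
  -- E ∘ F = Q
  have hEF : E ∘L F = Q := by
    apply sa_idem_eq'
    · ext x
      simp only [ContinuousLinearMap.comp_apply]
      rw [hF1x (F x)]
    · exact hF3
    · exact hQQ
    · exact hQsa
    · ext x
      simp only [LinearMap.mem_ker, ContinuousLinearMap.coe_coe,
        ContinuousLinearMap.comp_apply]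
      constructor
      · intro h
        rw [hQzero, Submodule.mem_orthogonal]
        intro u hu
        obtain ⟨z, rfl⟩ := hu
        calc ⟪E z, x⟫ = ⟪E (F (E z)), x⟫ := by rw [hF1x]
          _ = ⟪E z, E (F x)⟫ := hEFsym (E z) x
          _ = 0 := by rw [h, inner_zero_right]
      · intro h
        rw [hQzero] at h
        have h1 : ⟪E (F x), E (F x)⟫ = 0 := by
          calc ⟪E (F x), E (F x)⟫ = ⟪x, E (F (E (F x)))⟫ := hEFsym x (E (F x))
            _ = ⟪x, E (F x)⟫ := by rw [hF1x (F x)]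
            _ = 0 := by
                rw [← inner_conj_symm x (E (F x)),
                  (show ⟪E (F x), x⟫ = 0 from (Submodule.mem_orthogonal _ _).mp h _ ⟨F x, rfl⟩), map_zero]
        exact inner_self_eq_zero.mp h1
  -- F = P ∘ Q
  have hFPQ : F = P ∘L Q := by
    have hsplit : F = (F ∘L E) ∘L (E ∘L F) := by
      ext x
      simp only [ContinuousLinearMap.comp_apply]
      rw [hidemx (F x), hF2x x]
    rw [hsplit, hFE, hEF]
  -- W ∘ W = P ∘ Q pointwise
  have hWW : ∀ x, W (W x) = P (Q x) := by
    intro x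
    obtain ⟨w, hw⟩ := hQmem x
    simp only [ContinuousLinearMap.coe_coe] at hw
    have hx1 : W x = W (Q x) := by
      have h0 : W (x - Q x) = 0 := hWker _ (hQsub x)
      rw [map_sub, sub_eq_zero] at h0
      exact h0
    have key : W (W (E w)) = P (E w) := by
      calc W (W (E w)) = W (absE w) := by rw [hWE]
        _ = P (W (absE w)) := (hPid _ (hWmem _)).symm
        _ = W (V (W (absE w))) := (hWV _).symm
        _ = W (V (V (absE w))) := by rw [hclaim1]
        _ = W (V (E w)) := by rw [← hpolarx]
        _ = P (E w) := hWV _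
    calc W (W x) = W (W (Q x)) := by rw [hx1]
      _ = W (W (E w)) := by rw [← hw]
      _ = P (E w) := key
      _ = P (Q x) := by rw [hw]
  refine ⟨?_, hcl, hFPQ⟩
  ext x
  have h1 := ContinuousLinearMap.ext_iff.mp hFPQ x
  simp only [ContinuousLinearMap.comp_apply] at h1 ⊢
  rw [h1, ← hWW x]
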